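/- Let $X_0, X_1$ be perfect Polish spaces and $\gamma : X_0 \times X_1 \to 2$ any 2-coloring. Then there exist a color $j < 2$, nonempty open sets $U_0 \subseteq X_0$, $U_1 \subseteq X_1$, and sets $Y_0 \subseteq X_0$, $Y_1 \subseteq X_1$, with $Y_0$ dense in $U_0$ and $Y_1$ dense in $U_1$, such that $\gamma(x,y) = j$ for all $(x,y) \in Y_0 \times Y_1$. -/

import Mathlib

open Set

noncomputable section PGAux

variable {X : Type} [TopologicalSpace X]

/-- `S` is everywhere non-meagre inside the open set `U`. -/
def PGSolidIn (S U : Set X) : Prop :=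
  ∀ V : Set X, IsOpen V → V.Nonempty → V ⊆ U → ¬ IsMeagre (S ∩ V)

lemma pg_not_isMeagre_of_isOpen [BaireSpace X] {V : Set X} (h : IsOpen V) (hne : V.Nonempty) :
    ¬ IsMeagre V := by
  intro hm
  have hd : Dense Vᶜ := dense_of_mem_residual hm
  obtain ⟨x, hx1, hx2⟩ := hd.inter_open_nonempty V h hne
  exact hx2 hx1

lemma pg_solidIn_univ [BaireSpace X] : PGSolidIn (univ : Set X) univ := by
  intro V hV hne _
  rw [univ_inter]
  exact pg_not_isMeagre_of_isOpen hV hne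

lemma pg_nonempty_of_not_isMeagre {S : Set X} (h : ¬ IsMeagre S) : S.Nonempty := by
  rcases S.eq_empty_or_nonempty with rfl | hne
  · exact absurd IsMeagre.empty h
  · exact hne

lemma pg_isMeagre_union {s t : Set X} (hs : IsMeagre s) (ht : IsMeagre t) :
    IsMeagre (s ∪ t) := by
  rw [IsMeagre, compl_union]
  exact Filter.inter_mem hs ht

lemma pg_diff_nonempty_of_not_isMeagre {S M : Set X} (hS : ¬ IsMeagre S) (hM : IsMeagre M) :
    (S \ M).Nonempty := by
  rw [Set.nonempty_iff_ne_empty]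
  intro h
  exact hS (hM.mono (by rw [Set.diff_eq_empty] at h; exact h))

/-- a countable family of nonempty basic open sets refining every open set at every point. -/
lemma pg_exists_basis_seq [SecondCountableTopology X] [Nonempty X] :
    ∃ e : ℕ → Set X, (∀ n, IsOpen (e n)) ∧ (∀ n, (e n).Nonempty) ∧
      (∀ x : X, ∀ N : Set X, IsOpen N → x ∈ N → ∃ n, x ∈ e n ∧ e n ⊆ N) := by
  obtain ⟨b, hbc, hbne, hbas⟩ := TopologicalSpace.exists_countable_basis X
  have hbnonempty : b.Nonempty := by
    obtain ⟨s, hs, -, -⟩ :=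
      hbas.exists_subset_of_mem_open (mem_univ (Classical.arbitrary X)) isOpen_univ
    exact ⟨s, hs⟩
  obtain ⟨f, hf⟩ := hbc.exists_eq_range hbnonempty
  have hmem : ∀ n, f n ∈ b := by intro n; rw [hf]; exact mem_range_self n
  refine ⟨f, fun n => hbas.isOpen (hmem n), fun n => ?_, fun x N hN hxN => ?_⟩
  · rw [Set.nonempty_iff_ne_empty]
    intro h
    exact hbne (h ▸ hmem n)
  · obtain ⟨s, hs, hxs, hsN⟩ := hbas.exists_subset_of_mem_open hxN hN
    rw [hf] at hs
    obtain ⟨n, rfl⟩ := hs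
    exact ⟨n, hxs, hsN⟩

/-- dense sequence in an arbitrary nonempty set. -/
lemma pg_dense_seq {e : ℕ → Set X}
    (hmem : ∀ x : X, ∀ N : Set X, IsOpen N → x ∈ N → ∃ n, x ∈ e n ∧ e n ⊆ N)
    {S : Set X} (hS : S.Nonempty) :
    ∃ q : ℕ → X, (∀ n, q n ∈ S) ∧ S ⊆ closure (range q) := by
  classical
  refine ⟨fun n => if h : (S ∩ e n).Nonempty then h.choose else hS.choose, fun n => ?_, ?_⟩
  · by_cases h : (S ∩ e n).Nonempty
    · simp only [dif_pos h]; exact h.choose_spec.1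
    · simp only [dif_neg h]; exact hS.choose_spec
  · intro x hx
    rw [mem_closure_iff]
    intro N hN hxN
    obtain ⟨n, hxn, hnN⟩ := hmem x N hN hxN
    have h : (S ∩ e n).Nonempty := ⟨x, hx, hxn⟩
    refine ⟨if h' : (S ∩ e n).Nonempty then h'.choose else hS.choose, ?_, ?_⟩
    · simp only [dif_pos h]; exact hnN h.choose_spec.2
    · exact mem_range_self n

/-- Banach category localization : a non-meagre set is everywhere non-meagre in some open set. -/
lemma pg_exists_solidIn {e : ℕ → Set X}
    (heo : ∀ n, IsOpen (e n))
    (hmem : ∀ x : X, ∀ N : Set X, IsOpen N → x ∈ N → ∃ n, x ∈ e n ∧ e n ⊆ N)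
    {S : Set X} (hS : ¬ IsMeagre S) :
    ∃ U, IsOpen U ∧ U.Nonempty ∧ PGSolidIn S U := by
  classical
  by_contra hcon
  push_neg at hcon
  set O : Set X := ⋃ n, if IsMeagre (S ∩ e n) then e n else ∅ with hOdef
  have hOopen : IsOpen O := by
    refine isOpen_iUnion fun n => ?_
    split_ifs
    · exact heo n
    · exact isOpen_empty
  have hSO : IsMeagre (S ∩ O) := by
    have : S ∩ O ⊆ ⋃ n, if IsMeagre (S ∩ e n) then S ∩ e n else ∅ := by
      rintro x ⟨hxS, hxO⟩
      simp only [hOdef, mem_iUnion] at hxO ⊢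
      obtain ⟨n, hn⟩ := hxO
      refine ⟨n, ?_⟩
      by_cases h : IsMeagre (S ∩ e n)
      · rw [if_pos h] at hn ⊢; exact ⟨hxS, hn⟩
      · rw [if_neg h] at hn; exact absurd hn (notMem_empty x)
    refine (isMeagre_iUnion fun n => ?_).mono this
    split_ifs with h
    · exact h
    · exact IsMeagre.empty
  have hOdense : Dense O := by
    intro x
    rw [mem_closure_iff]
    intro N hN hxN
    have hnot : ¬ PGSolidIn S N := hcon N hN ⟨x, hxN⟩
    unfold PGSolidIn at hnot
    push_neg at hnot
    obtain ⟨V, hVo, hVne, hVN, hVm⟩ := hnot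
    obtain ⟨v, hv⟩ := hVne
    obtain ⟨n, hvn, hnV⟩ := hmem v V hVo hv
    have hnm : IsMeagre (S ∩ e n) := hVm.mono (inter_subset_inter_right S hnV)
    refine ⟨v, hVN hv, ?_⟩
    simp only [hOdef, mem_iUnion]
    exact ⟨n, by rw [if_pos hnm]; exact hvn⟩
  have hOc : IsMeagre Oᶜ := by
    rw [IsMeagre, compl_compl]
    exact residual_of_dense_open hOopen hOdense
  refine hS ((pg_isMeagre_union hSO hOc).mono ?_)
  intro x hx
  by_cases h : x ∈ O
  · exact Or.inl ⟨hx, h⟩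
  · exact Or.inr h

end PGAux

noncomputable section PGKey

open Set

lemma pg_fin2_eq_zero : ∀ v : Fin 2, v ≠ 1 → v = 0 := by decide

/-- Key extension lemma: if there is no `0`-monochromatic somewhere dense grid, then for
solid `D`, `E` and target open `B₀`, some `x ∈ D ∩ B₀` keeps `E ∩ (1-row of x)` solid. -/
lemma pg_key {A B : Type} [TopologicalSpace A] [TopologicalSpace B]
    [Nonempty A] [Nonempty B]
    [SecondCountableTopology A] [SecondCountableTopology B]
    [BaireSpace A] [BaireSpace B]
    (γ : A × B → Fin 2)
    (hno : ∀ (U₀ : Set A) (U₁ : Set B) (Y₀ : Set A) (Y₁ : Set B),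
        IsOpen U₀ → U₀.Nonempty → IsOpen U₁ → U₁.Nonempty →
        U₀ ⊆ closure Y₀ → U₁ ⊆ closure Y₁ →
        ¬ (∀ x ∈ Y₀, ∀ y ∈ Y₁, γ (x, y) = 0))
    {D : Set A} {E : Set B} (hD : PGSolidIn D univ) (hE : PGSolidIn E univ)
    {B₀ : Set A} (hB₀ : IsOpen B₀) (hB₀ne : B₀.Nonempty) :
    ∃ x, x ∈ D ∩ B₀ ∧ PGSolidIn (E ∩ {y | γ (x, y) = 1}) univ := by
  classical
  obtain ⟨eA, heAo, heAne, heAmem⟩ := pg_exists_basis_seq (X := A)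
  obtain ⟨eB, heBo, heBne, heBmem⟩ := pg_exists_basis_seq (X := B)
  by_contra hcon
  push_neg at hcon
  -- the classes
  set Z : ℕ → Set A :=
    fun n => {x | x ∈ D ∩ B₀ ∧ IsMeagre (E ∩ {y | γ (x, y) = 1} ∩ eB n)} with hZdef
  have hDB₀ : ¬ IsMeagre (D ∩ B₀) := hD B₀ hB₀ hB₀ne (subset_univ _)
  have hcover : D ∩ B₀ ⊆ ⋃ n, Z n := by
    intro x hx
    have hnot : ¬ PGSolidIn (E ∩ {y | γ (x, y) = 1}) univ := hcon x hx
    unfold PGSolidIn at hnot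
    push_neg at hnot
    obtain ⟨V, hVo, hVne, -, hVm⟩ := hnot
    obtain ⟨v, hv⟩ := hVne
    obtain ⟨n, hvn, hnV⟩ := heBmem v V hVo hv
    exact mem_iUnion.2 ⟨n, hx, hVm.mono (inter_subset_inter_right _ hnV)⟩
  have hZn : ∃ n, ¬ IsMeagre (Z n) := by
    by_contra hall
    push_neg at hall
    exact hDB₀ ((isMeagre_iUnion hall).mono hcover)
  obtain ⟨n, hZnm⟩ := hZn
  obtain ⟨U, hUo, hUne, hUsolid⟩ := pg_exists_solidIn heAo heAmem hZnm
  have hZsub : Z n ⊆ B₀ := fun x hx => hx.1.2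
  -- the open set U' = U ∩ B₀
  have hZUne : (Z n ∩ U).Nonempty :=
    pg_nonempty_of_not_isMeagre (hUsolid U hUo hUne (subset_refl U))
  obtain ⟨z, hzZ, hzU⟩ := hZUne
  set U' : Set A := U ∩ B₀ with hU'def
  have hU'o : IsOpen U' := hUo.inter hB₀
  have hU'ne : U'.Nonempty := ⟨z, hzU, hZsub hzZ⟩
  have hU'solid : PGSolidIn (Z n) U' := fun V hVo hVne hVU =>
    hUsolid V hVo hVne (hVU.trans inter_subset_left)
  -- dense sequence in Z n ∩ U'
  have hSne : (Z n ∩ U').Nonempty := ⟨z, hzZ, hzU, hZsub hzZ⟩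
  obtain ⟨q, hqmem, hqdense⟩ := pg_dense_seq heAmem hSne
  have hU'cl : U' ⊆ closure (range q) := by
    have h1 : U' ⊆ closure (Z n ∩ U') := by
      intro u hu
      rw [mem_closure_iff]
      intro N hN huN
      have hV : (Z n ∩ (N ∩ U')).Nonempty :=
        pg_nonempty_of_not_isMeagre
          (hU'solid (N ∩ U') (hN.inter hU'o) ⟨u, huN, hu⟩ inter_subset_right)
      obtain ⟨w, hw1, hw2, hw3⟩ := hV
      exact ⟨w, hw2, hw1, hw3⟩
    refine h1.trans ?_
    rw [← closure_closure (s := range q)]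
    exact closure_mono hqdense
  -- the monochromatic pair
  set M : Set B := ⋃ k, E ∩ {y | γ (q k, y) = 1} ∩ eB n with hMdef
  have hMm : IsMeagre M := isMeagre_iUnion fun k => (hqmem k).1.2
  set Y₁ : Set B := (E ∩ eB n) \ M with hY₁def
  have hY₁cl : eB n ⊆ closure Y₁ := by
    intro y hy
    rw [mem_closure_iff]
    intro N hN hyN
    have hEm : ¬ IsMeagre (E ∩ (N ∩ eB n)) :=
      hE (N ∩ eB n) (hN.inter (heBo n)) ⟨y, hyN, hy⟩ (subset_univ _)
    obtain ⟨w, hw1, hw2⟩ := pg_diff_nonempty_of_not_isMeagre hEm hMm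
    exact ⟨w, hw1.2.1, ⟨⟨hw1.1, hw1.2.2⟩, hw2⟩⟩
  refine hno U' (eB n) (range q) Y₁ hU'o hU'ne (heBo n) (heBne n) hU'cl hY₁cl ?_
  rintro x ⟨k, rfl⟩ y hy
  refine pg_fin2_eq_zero _ fun h1 => ?_
  exact hy.2 (mem_iUnion.2 ⟨k, ⟨hy.1.1, h1⟩, hy.1.2⟩)

end PGKey

noncomputable section PGBuild

open Set

variable {A B : Type} [TopologicalSpace A] [TopologicalSpace B]
  (γ : A × B → Fin 2) (eA : ℕ → Set A) (eB : ℕ → Set B)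
  (keyX : ∀ (D : Set A) (E : Set B), PGSolidIn D univ → PGSolidIn E univ → ∀ n : ℕ,
      ∃ x, x ∈ D ∩ eA n ∧ PGSolidIn (E ∩ {y | γ (x, y) = 1}) univ)
  (keyY : ∀ (D : Set A) (E : Set B), PGSolidIn D univ → PGSolidIn E univ → ∀ n : ℕ,
      ∃ y, y ∈ E ∩ eB n ∧ PGSolidIn (D ∩ {x | γ (x, y) = 1}) univ)
  (hA : PGSolidIn (univ : Set A) univ) (hB : PGSolidIn (univ : Set B) univ)

/-- The state after `n` rounds of the fusion. -/
def pgChain : ℕ → {p : Set A × Set B // PGSolidIn p.1 univ ∧ PGSolidIn p.2 univ} :=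
  fun n => Nat.rec ⟨(univ, univ), hA, hB⟩
    (fun n s =>
      let hx := keyX s.1.1 s.1.2 s.2.1 s.2.2 n
      let hy := keyY s.1.1 (s.1.2 ∩ {y | γ (hx.choose, y) = 1}) s.2.1 hx.choose_spec.2 n
      ⟨(s.1.1 ∩ {x | γ (x, hy.choose) = 1}, s.1.2 ∩ {y | γ (hx.choose, y) = 1}),
        hy.choose_spec.2, hx.choose_spec.2⟩) n

def pgX (n : ℕ) : A :=
  (keyX (pgChain γ eA eB keyX keyY hA hB n).1.1 (pgChain γ eA eB keyX keyY hA hB n).1.2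
    (pgChain γ eA eB keyX keyY hA hB n).2.1 (pgChain γ eA eB keyX keyY hA hB n).2.2 n).choose

def pgY (n : ℕ) : B :=
  (keyY (pgChain γ eA eB keyX keyY hA hB n).1.1
    ((pgChain γ eA eB keyX keyY hA hB n).1.2 ∩ {y | γ (pgX γ eA eB keyX keyY hA hB n, y) = 1})
    (pgChain γ eA eB keyX keyY hA hB n).2.1
    (keyX (pgChain γ eA eB keyX keyY hA hB n).1.1 (pgChain γ eA eB keyX keyY hA hB n).1.2
      (pgChain γ eA eB keyX keyY hA hB n).2.1 (pgChain γ eA eB keyX keyY hA hB n).2.2 n).choose_spec.2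
    n).choose

lemma pgChain_succ_fst (n : ℕ) :
    (pgChain γ eA eB keyX keyY hA hB (n + 1)).1.1 =
      (pgChain γ eA eB keyX keyY hA hB n).1.1 ∩
        {x | γ (x, pgY γ eA eB keyX keyY hA hB n) = 1} := rfl

lemma pgChain_succ_snd (n : ℕ) :
    (pgChain γ eA eB keyX keyY hA hB (n + 1)).1.2 =
      (pgChain γ eA eB keyX keyY hA hB n).1.2 ∩
        {y | γ (pgX γ eA eB keyX keyY hA hB n, y) = 1} := rfl

lemma pgX_mem (n : ℕ) :
    pgX γ eA eB keyX keyY hA hB n ∈ (pgChain γ eA eB keyX keyY hA hB n).1.1 ∩ eA n :=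
  (keyX (pgChain γ eA eB keyX keyY hA hB n).1.1 (pgChain γ eA eB keyX keyY hA hB n).1.2
    (pgChain γ eA eB keyX keyY hA hB n).2.1 (pgChain γ eA eB keyX keyY hA hB n).2.2 n).choose_spec.1

lemma pgY_mem (n : ℕ) :
    pgY γ eA eB keyX keyY hA hB n ∈
      ((pgChain γ eA eB keyX keyY hA hB n).1.2 ∩
        {y | γ (pgX γ eA eB keyX keyY hA hB n, y) = 1}) ∩ eB n :=
  (keyY (pgChain γ eA eB keyX keyY hA hB n).1.1
    ((pgChain γ eA eB keyX keyY hA hB n).1.2 ∩ {y | γ (pgX γ eA eB keyX keyY hA hB n, y) = 1})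
    (pgChain γ eA eB keyX keyY hA hB n).2.1
    (keyX (pgChain γ eA eB keyX keyY hA hB n).1.1 (pgChain γ eA eB keyX keyY hA hB n).1.2
      (pgChain γ eA eB keyX keyY hA hB n).2.1 (pgChain γ eA eB keyX keyY hA hB n).2.2 n).choose_spec.2
    n).choose_spec.1

lemma pgChain_fst_mono : ∀ {i k : ℕ}, i ≤ k →
    (pgChain γ eA eB keyX keyY hA hB k).1.1 ⊆ (pgChain γ eA eB keyX keyY hA hB i).1.1 := by
  intro i k h
  induction h with
  | refl => exact subset_refl _
  | step h ih =>
    refine subset_trans ?_ ih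
    rw [pgChain_succ_fst]
    exact inter_subset_left

lemma pgChain_snd_mono : ∀ {i k : ℕ}, i ≤ k →
    (pgChain γ eA eB keyX keyY hA hB k).1.2 ⊆ (pgChain γ eA eB keyX keyY hA hB i).1.2 := by
  intro i k h
  induction h with
  | refl => exact subset_refl _
  | step h ih =>
    refine subset_trans ?_ ih
    rw [pgChain_succ_snd]
    exact inter_subset_left

lemma pg_mono_pairs (i k : ℕ) :
    γ (pgX γ eA eB keyX keyY hA hB i, pgY γ eA eB keyX keyY hA hB k) = 1 := by
  rcases le_or_gt i k with h | h
  · have h1 : pgY γ eA eB keyX keyY hA hB k ∈ (pgChain γ eA eB keyX keyY hA hB (k + 1)).1.2 := by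
      rw [pgChain_succ_snd]
      exact (pgY_mem γ eA eB keyX keyY hA hB k).1
    have h2 := pgChain_snd_mono γ eA eB keyX keyY hA hB (Nat.succ_le_succ h) h1
    rw [pgChain_succ_snd] at h2
    exact h2.2
  · have h1 : pgX γ eA eB keyX keyY hA hB i ∈ (pgChain γ eA eB keyX keyY hA hB (k + 1)).1.1 :=
      pgChain_fst_mono γ eA eB keyX keyY hA hB h (pgX_mem γ eA eB keyX keyY hA hB i).1
    rw [pgChain_succ_fst] at h1
    exact h1.2

end PGBuild

/-- `PG₂` restricted to 2-colorings is true: for any 2-coloring of a product of two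
perfect Polish spaces there is a monochromatic somewhere dense grid. -/
theorem stmt6 (X₀ X₁ : Type) [TopologicalSpace X₀] [TopologicalSpace X₁]
    [PolishSpace X₀] [PolishSpace X₁] [Nonempty X₀] [Nonempty X₁]
    (hperf₀ : Perfect (Set.univ : Set X₀)) (hperf₁ : Perfect (Set.univ : Set X₁))
    (γ : X₀ × X₁ → Fin 2) :
    ∃ (j : Fin 2) (U₀ : Set X₀) (U₁ : Set X₁) (Y₀ : Set X₀) (Y₁ : Set X₁),
      IsOpen U₀ ∧ U₀.Nonempty ∧ IsOpen U₁ ∧ U₁.Nonempty ∧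
      U₀ ⊆ closure Y₀ ∧ U₁ ⊆ closure Y₁ ∧
      Y₀ ×ˢ Y₁ ⊆ γ ⁻¹' {j} := by
  classical
  haveI : BaireSpace X₀ := by letI := TopologicalSpace.upgradeIsCompletelyMetrizable X₀; infer_instance
  haveI : BaireSpace X₁ := by letI := TopologicalSpace.upgradeIsCompletelyMetrizable X₁; infer_instance
  by_cases hex : ∃ (U₀ : Set X₀) (U₁ : Set X₁) (Y₀ : Set X₀) (Y₁ : Set X₁),
      IsOpen U₀ ∧ U₀.Nonempty ∧ IsOpen U₁ ∧ U₁.Nonempty ∧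
      U₀ ⊆ closure Y₀ ∧ U₁ ⊆ closure Y₁ ∧ ∀ x ∈ Y₀, ∀ y ∈ Y₁, γ (x, y) = 0
  · obtain ⟨U₀, U₁, Y₀, Y₁, h1, h2, h3, h4, h5, h6, h7⟩ := hex
    refine ⟨0, U₀, U₁, Y₀, Y₁, h1, h2, h3, h4, h5, h6, ?_⟩
    rintro ⟨x, y⟩ ⟨hx, hy⟩
    simpa using h7 x hx y hy
  · have hno : ∀ (U₀ : Set X₀) (U₁ : Set X₁) (Y₀ : Set X₀) (Y₁ : Set X₁),
        IsOpen U₀ → U₀.Nonempty → IsOpen U₁ → U₁.Nonempty →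
        U₀ ⊆ closure Y₀ → U₁ ⊆ closure Y₁ →
        ¬ (∀ x ∈ Y₀, ∀ y ∈ Y₁, γ (x, y) = 0) := by
      intro U₀ U₁ Y₀ Y₁ h1 h2 h3 h4 h5 h6 h7
      exact hex ⟨U₀, U₁, Y₀, Y₁, h1, h2, h3, h4, h5, h6, h7⟩
    have hno' : ∀ (U₀ : Set X₁) (U₁ : Set X₀) (Y₀ : Set X₁) (Y₁ : Set X₀),
        IsOpen U₀ → U₀.Nonempty → IsOpen U₁ → U₁.Nonempty →
        U₀ ⊆ closure Y₀ → U₁ ⊆ closure Y₁ →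
        ¬ (∀ y ∈ Y₀, ∀ x ∈ Y₁, (fun p : X₁ × X₀ => γ (p.2, p.1)) (y, x) = 0) := by
      intro U₀ U₁ Y₀ Y₁ h1 h2 h3 h4 h5 h6 h7
      exact hno U₁ U₀ Y₁ Y₀ h3 h4 h1 h2 h6 h5 (fun x hx y hy => h7 y hy x hx)
    obtain ⟨eA, heAo, heAne, heAmem⟩ := pg_exists_basis_seq (X := X₀)
    obtain ⟨eB, heBo, heBne, heBmem⟩ := pg_exists_basis_seq (X := X₁)
    have keyX : ∀ (D : Set X₀) (E : Set X₁),
        PGSolidIn D Set.univ → PGSolidIn E Set.univ → ∀ n : ℕ,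
        ∃ x, x ∈ D ∩ eA n ∧ PGSolidIn (E ∩ {y | γ (x, y) = 1}) Set.univ :=
      fun D E hD hE n => pg_key γ hno hD hE (heAo n) (heAne n)
    have keyY : ∀ (D : Set X₀) (E : Set X₁),
        PGSolidIn D Set.univ → PGSolidIn E Set.univ → ∀ n : ℕ,
        ∃ y, y ∈ E ∩ eB n ∧ PGSolidIn (D ∩ {x | γ (x, y) = 1}) Set.univ :=
      fun D E hD hE n =>
        pg_key (fun p : X₁ × X₀ => γ (p.2, p.1)) hno' hE hD (heBo n) (heBne n)
    have hA : PGSolidIn (Set.univ : Set X₀) Set.univ := pg_solidIn_univ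
    have hB : PGSolidIn (Set.univ : Set X₁) Set.univ := pg_solidIn_univ
    refine ⟨1, Set.univ, Set.univ, Set.range (pgX γ eA eB keyX keyY hA hB),
      Set.range (pgY γ eA eB keyX keyY hA hB), isOpen_univ, Set.univ_nonempty,
      isOpen_univ, Set.univ_nonempty, ?_, ?_, ?_⟩
    · intro x _
      rw [mem_closure_iff]
      intro N hN hxN
      obtain ⟨n, -, hnN⟩ := heAmem x N hN hxN
      exact ⟨pgX γ eA eB keyX keyY hA hB n, hnN (pgX_mem γ eA eB keyX keyY hA hB n).2,
        Set.mem_range_self n⟩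
    · intro y _
      rw [mem_closure_iff]
      intro N hN hyN
      obtain ⟨n, -, hnN⟩ := heBmem y N hN hyN
      exact ⟨pgY γ eA eB keyX keyY hA hB n, hnN (pgY_mem γ eA eB keyX keyY hA hB n).2,
        Set.mem_range_self n⟩
    · rintro ⟨x, y⟩ ⟨⟨i, rfl⟩, ⟨k, rfl⟩⟩
      simpa using pg_mono_pairs γ eA eB keyX keyY hA hB i k
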